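/- Let φ1, φ2, X1, X2 be positive reals and β ∈ (0,1]. Define U2(τ) = (1/2)·φ2·(X2 + τ) + (1/2)·√( φ1·φ2·(X1 − β·τ)·(X2 + τ) ) on (−X2, X1/β). Then the derivative of U2 at τ = 0 is strictly negative if and only if β > √(4·φ2·X1/(φ1·X2)) + X1/X2. -/

import Mathlib

noncomputable section

set_option maxHeartbeats 1000000

/-- In Case 3, Player 2's payoff has strictly negative derivative at `τ = 0`
iff `β > √(4φ2X1/(φ1X2)) + X1/X2`. -/
theorem case3_payoff2_deriv_neg_iff (φ1 φ2 X1 X2 β : ℝ)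
    (hφ1 : 0 < φ1) (hφ2 : 0 < φ2) (hX1 : 0 < X1) (hX2 : 0 < X2)
    (hβ0 : 0 < β) (hβ1 : β ≤ 1) :
    deriv (fun τ : ℝ => (1 / 2) * φ2 * (X2 + τ) +
        (1 / 2) * Real.sqrt (φ1 * φ2 * (X1 - β * τ) * (X2 + τ))) 0 < 0 ↔
      β > Real.sqrt (4 * φ2 * X1 / (φ1 * X2)) + X1 / X2 := by
  have hprod : 0 < φ1 * φ2 * X1 * X2 := by positivity
  set s := Real.sqrt (φ1 * φ2 * X1 * X2) with hs
  have hs0 : 0 < s := Real.sqrt_pos.2 hprod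
  have hs2 : s ^ 2 = φ1 * φ2 * X1 * X2 := Real.sq_sqrt hprod.le
  set r := Real.sqrt (4 * φ2 * X1 / (φ1 * X2)) with hr
  have hr0 : 0 ≤ r := Real.sqrt_nonneg _
  have hr2 : r ^ 2 = 4 * φ2 * X1 / (φ1 * X2) := Real.sq_sqrt (by positivity)
  -- key algebraic identity : φ1 * X2 * r = 2 * s
  have hkey : φ1 * X2 * r = 2 * s := by
    have hsq : (φ1 * X2 * r) ^ 2 = (2 * s) ^ 2 := by
      have h12 : (φ1 * X2) ^ 2 * (4 * φ2 * X1 / (φ1 * X2)) = 4 * (φ1 * φ2 * X1 * X2) := by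
        field_simp
      nlinarith [hr2, hs2]
    have hfac : (φ1 * X2 * r - 2 * s) * (φ1 * X2 * r + 2 * s) = 0 := by ring_nf; nlinarith [hsq]
    rcases mul_eq_zero.1 hfac with h | h
    · linarith
    · nlinarith [mul_nonneg (mul_pos hφ1 hX2).le hr0]
  -- compute the derivative
  have h1 : HasDerivAt (fun τ : ℝ => X1 - β * τ) (0 - β * 1) 0 :=
    (hasDerivAt_const 0 X1).sub ((hasDerivAt_id 0).const_mul β)
  have h2 : HasDerivAt (fun τ : ℝ => X2 + τ) (0 + 1) 0 :=
    (hasDerivAt_const 0 X2).add (hasDerivAt_id 0)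
  have h3 : HasDerivAt (fun τ : ℝ => φ1 * φ2 * (X1 - β * τ) * (X2 + τ))
      ((φ1 * φ2 * (0 - β * 1)) * (X2 + 0) + (φ1 * φ2 * (X1 - β * 0)) * (0 + 1)) 0 :=
    (h1.const_mul (φ1 * φ2)).mul h2
  have hne : (fun τ : ℝ => φ1 * φ2 * (X1 - β * τ) * (X2 + τ)) 0 ≠ 0 := by
    simp only [mul_zero, sub_zero, add_zero]
    positivity
  have h4 := h3.sqrt hne
  have h5 : HasDerivAt (fun τ : ℝ => (1 / 2) * φ2 * (X2 + τ) +
      (1 / 2) * Real.sqrt (φ1 * φ2 * (X1 - β * τ) * (X2 + τ)))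
      ((1 / 2 * φ2) * (0 + 1) + (1 / 2) *
        (((φ1 * φ2 * (0 - β * 1)) * (X2 + 0) + (φ1 * φ2 * (X1 - β * 0)) * (0 + 1)) /
          (2 * Real.sqrt ((fun τ : ℝ => φ1 * φ2 * (X1 - β * τ) * (X2 + τ)) 0)))) 0 := by
    exact (h2.const_mul (1 / 2 * φ2)).add (h4.const_mul (1 / 2))
  have hsval : Real.sqrt ((fun τ : ℝ => φ1 * φ2 * (X1 - β * τ) * (X2 + τ)) 0) = s := by
    simp only [mul_zero, sub_zero, add_zero, hs]
  rw [hsval] at h5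
  rw [h5.deriv]
  have hnum : (φ1 * φ2 * (0 - β * 1)) * (X2 + 0) + (φ1 * φ2 * (X1 - β * 0)) * (0 + 1)
      = φ1 * φ2 * (X1 - β * X2) := by ring
  rw [hnum]
  have hdiv : φ1 * φ2 * (X1 - β * X2) / (2 * s) * (2 * s) = φ1 * φ2 * (X1 - β * X2) :=
    div_mul_cancel₀ _ (by positivity)
  have hX1X2 : X1 / X2 * X2 = X1 := div_mul_cancel₀ _ hX2.ne'
  constructor
  · intro h
    -- multiply h by 2*s > 0
    have h' : (1 / 2 * φ2 * (0 + 1) + 1 / 2 * (φ1 * φ2 * (X1 - β * X2) / (2 * s))) * (2 * s)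
        < 0 := mul_neg_of_neg_of_pos h (by positivity)
    have h'' : φ2 * s + (1 / 2) * (φ1 * φ2 * (X1 - β * X2)) < 0 := by nlinarith [hdiv]
    -- hence 2*s < φ1*(β*X2 - X1)
    have h3' : 2 * s < φ1 * (β * X2 - X1) := by nlinarith
    -- conclude
    rw [gt_iff_lt, ← mul_lt_mul_iff_of_pos_right hX2]
    nlinarith [hX1X2, hkey, h3']
  · intro h
    have h' : β * X2 - r * X2 - X1 > 0 := by
      have := sub_pos.2 h
      nlinarith [hX1X2, mul_pos this hX2]
    have h3' : 2 * s < φ1 * (β * X2 - X1) := by nlinarith [mul_pos hφ1 h', hkey]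
    have h'' : φ2 * s + (1 / 2) * (φ1 * φ2 * (X1 - β * X2)) < 0 := by
      nlinarith [mul_lt_mul_of_pos_left h3' hφ2]
    have hfin : (1 / 2 * φ2 * (0 + 1) + 1 / 2 * (φ1 * φ2 * (X1 - β * X2) / (2 * s))) * (2 * s)
        < 0 := by nlinarith [hdiv]
    rw [← mul_lt_mul_iff_of_pos_right (show (0:ℝ) < 2 * s by positivity), zero_mul]
    exact hfin
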